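/- arXiv:1201.4917 — 2 statements merged into one kernel-verified Lean document; each statement's English description precedes it below -/
import Mathlib

section
/- Let K be a simplicial complex on vertex set contained in [m], let σ ∈ K and ω ⊆ [m] with σ ∩ ω = ∅, and let σ̃ = [m] \ (σ ∪ ω). Then the Alexander dual of K_{σ,ω} relative to ω equals (K*)_{σ̃,ω}, i.e., (K_{σ,ω})* = (K*)_{σ̃,ω}. Here K_{σ,ω} = { ω ∩ η : η ∈ link_K(σ) } and for a complex L, L_{τ,ω} = { ω ∩ η : η ∈ link_L(τ) }. -/
/-- A simplicial complex on vertex set contained in `[m] = Fin m`. -/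
def IsSimplicialComplex {m : ℕ} (K : Set (Finset (Fin m))) : Prop :=
  ∀ σ ∈ K, ∀ τ ⊆ σ, τ ∈ K

/-- `link_K(σ) = { η ∈ K : η ∪ σ ∈ K, η ∩ σ = ∅ }`. -/
def link {m : ℕ} (K : Set (Finset (Fin m))) (σ : Finset (Fin m)) : Set (Finset (Fin m)) :=
  {η | η ∈ K ∧ η ∪ σ ∈ K ∧ η ∩ σ = ∅}

/-- `K_{σ,ω} = { ω ∩ η : η ∈ link_K(σ) }`. -/
def linkRestrict {m : ℕ} (K : Set (Finset (Fin m))) (σ ω : Finset (Fin m)) :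
    Set (Finset (Fin m)) :=
  {τ | ∃ η ∈ link K σ, τ = ω ∩ η}

/-- The Alexander dual of a complex `L` on vertex set `⊆ ω`, relative to `ω`:
`L* = { ω\τ : τ ⊆ ω, τ ∉ L }`. -/
def alexanderDualRel {m : ℕ} (ω : Finset (Fin m)) (L : Set (Finset (Fin m))) :
    Set (Finset (Fin m)) :=
  {ρ | ρ ⊆ ω ∧ ω \ ρ ∉ L}

/-- The Alexander dual of `K` relative to `[m]`. -/
def alexanderDual {m : ℕ} (K : Set (Finset (Fin m))) : Set (Finset (Fin m)) :=
  {τ | τᶜ ∉ K}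

/-- `(K_{σ,ω})* = (K*)_{σ̃,ω}` where `σ̃ = [m]\(σ ∪ ω)` and the left
Alexander dual is taken relative to `ω`. -/
theorem alexanderDualRel_linkRestrict {m : ℕ} (K : Set (Finset (Fin m)))
    (hK : IsSimplicialComplex K) (σ ω : Finset (Fin m)) (hσ : σ ∈ K) (hσω : σ ∩ ω = ∅) :
    alexanderDualRel ω (linkRestrict K σ ω) =
      linkRestrict (alexanderDual K) (σ ∪ ω)ᶜ ω := by

  have hdisj : ∀ x : Fin m, x ∈ σ → x ∉ ω := by
    intro x hx hxw
    exact Finset.notMem_empty x (hσω ▸ Finset.mem_inter.2 ⟨hx, hxw⟩)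
  ext ρ
  simp only [alexanderDualRel, linkRestrict, link, alexanderDual, Set.mem_setOf_eq]
  constructor
  · rintro ⟨hρω, hnot⟩
    have hKnot : (ω \ ρ) ∪ σ ∉ K := by
      intro hIn
      apply hnot
      refine ⟨ω \ ρ, ⟨hK _ hIn _ Finset.subset_union_left, hIn, ?_⟩, ?_⟩
      · ext x
        have := hdisj x
        simp only [Finset.mem_inter, Finset.mem_sdiff, Finset.notMem_empty, iff_false]
        tauto
      · ext x
        simp only [Finset.mem_sdiff, Finset.mem_inter]
        tauto
    have hkey : (ρ ∪ (σ ∪ ω)ᶜ)ᶜ = (ω \ ρ) ∪ σ := by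
      ext x
      have h1 := hdisj x
      have h2 := @hρω x
      simp only [Finset.mem_compl, Finset.mem_union, Finset.mem_sdiff, Finset.mem_compl]
      tauto
    refine ⟨ρ, ⟨?_, ?_, ?_⟩, ?_⟩
    · intro hc
      apply hKnot
      apply hK _ hc
      rw [← hkey]
      exact Finset.compl_subset_compl.mpr Finset.subset_union_left
    · rw [hkey]; exact hKnot
    · ext x
      have h2 := @hρω x
      simp only [Finset.mem_inter, Finset.mem_compl, Finset.mem_union, Finset.notMem_empty,
        iff_false]
      tauto
    · exact (Finset.inter_eq_right.mpr hρω).symm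
  · rintro ⟨η, ⟨hη, hηst, hηd⟩, rfl⟩
    refine ⟨Finset.inter_subset_left, ?_⟩
    rintro ⟨η', ⟨hη', hη'σ, hη'd⟩, heq⟩
    apply hηst
    apply hK _ hη'σ
    intro x hx
    simp only [Finset.mem_compl, Finset.mem_union, not_or, Finset.mem_compl, not_not] at hx
    obtain ⟨hxη, hxsw⟩ := hx
    by_cases hxs : x ∈ σ
    · exact Finset.mem_union_right _ hxs
    · have hxw : x ∈ ω := by tauto
      have : x ∈ ω ∩ η' := by
        rw [← heq]
        simp only [Finset.mem_sdiff, Finset.mem_inter]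
        exact ⟨hxw, fun h => hxη h.2⟩
      exact Finset.mem_union_left _ (Finset.mem_inter.mp this).2
end

section
/- Let (X_k, A_k), k = 1,...,m, be pairs of sets with A_k ⊆ X_k, and let B_k = X_k \ A_k. For a simplicial complex K with vertex set contained in [m], define Z_K(X,A) = ⋃_{σ ∈ K} D(σ) ⊆ X_1 × ⋯ × X_m, where D(σ) = Y_1 × ⋯ × Y_m with Y_i = X_i if i ∈ σ and Y_i = A_i if i ∉ σ. Similarly define Z_{K*}(X,B) using D*(ω) = Z_1 × ⋯ × Z_m with Z_i = X_i if i ∈ ω, Z_i = B_i otherwise, where K* is the Alexander dual of K relative to [m]. Then Z_{K*}(X,B) = (X_1 × ⋯ × X_m) \ Z_K(X,A). -/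
/-- `D(σ) = Y_1 × ⋯ × Y_m` with `Y_i = X_i` if `i ∈ σ` and `Y_i = A_i` otherwise. -/
def DProd {m : ℕ} {α : Fin m → Type*} (X A : ∀ i, Set (α i)) (σ : Finset (Fin m)) :
    Set (∀ i, α i) :=
  {f | ∀ i, f i ∈ if i ∈ σ then X i else A i}

/-- The generalized moment-angle complex `Z_K(X,A) = ⋃_{σ ∈ K} D(σ)`. -/
def ZComplex {m : ℕ} {α : Fin m → Type*} (X A : ∀ i, Set (α i))
    (K : Set (Finset (Fin m))) : Set (∀ i, α i) :=
  ⋃ σ ∈ K, DProd X A σ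

/-- `Z_{K*}(X,B) = (X_1 × ⋯ × X_m) \ Z_K(X,A)` where `B_k = X_k \ A_k`. -/
theorem ZComplex_alexanderDual_compl {m : ℕ} {α : Fin m → Type*}
    (X A : ∀ i, Set (α i)) (hA : ∀ i, A i ⊆ X i)
    (K : Set (Finset (Fin m))) (hK : IsSimplicialComplex K) :
    ZComplex X (fun i => X i \ A i) (alexanderDual K) =
      {f : ∀ i, α i | ∀ i, f i ∈ X i} \ ZComplex X A K := by
  ext f
  simp only [ZComplex, DProd, alexanderDual, Set.mem_iUnion, Set.mem_setOf_eq,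
    Set.mem_diff, exists_prop]
  constructor
  · rintro ⟨τ, hτ, hf⟩
    refine ⟨fun i => ?_, ?_⟩
    · have := hf i
      split at this
      · exact this
      · exact this.1
    · rintro ⟨σ, hσ, hfσ⟩
      apply hτ
      apply hK σ hσ
      intro i hi
      simp only [Finset.mem_compl] at hi
      have h1 := hf i
      have h2 := hfσ i
      by_contra hiσ
      simp only [hi, if_neg hiσ, if_neg] at h1 h2
      exact h1.2 h2
  · rintro ⟨hX, hZ⟩
    classical
    refine ⟨{i | f i ∈ A i}.toFinset, ?_, ?_⟩
    · intro hmem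
      apply hZ
      refine ⟨_, hmem, fun i => ?_⟩
      by_cases h : f i ∈ A i
      · simp [h, hX i]
      · simp [h, hX i]
    · intro i
      by_cases h : f i ∈ A i
      · simp [h, hX i]
      · simp [h, hX i]
end
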